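/- Let G be a simple graph with maximum degree Δ ≥ 1, adjacency eigenvalues λ₁,…,λₙ, m edges, Zagreb index Z = ∑ᵢ dᵢ², and Q four-cycles. For any 0 < r < 1, the energy E(G) = ∑ᵢ|λᵢ| satisfies E(G) ≤ (−1/(2r(r+1)²))·(2Z−2m+8Q)/Δ³ + ((3r²+2r+1)/(2r(r+1)²))·(2m)/Δ + Δn·r²(2r+1)/(2r(r+1)²). -/

import Mathlib

lemma conj_pow' {n : ℕ} (U D : Matrix (Fin n) (Fin n) ℝ)
    (h1 : star U * U = 1) (h2 : U * star U = 1) (k : ℕ) :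
    (U * D * star U) ^ k = U * D ^ k * star U := by
  induction k with
  | zero => simp [h2]
  | succ k ih =>
    rw [pow_succ, ih, pow_succ]
    calc U * D ^ k * star U * (U * D * star U)
        = U * D ^ k * (star U * U) * (D * star U) := by
          simp only [Matrix.mul_assoc]
      _ = U * (D ^ k * D) * star U := by rw [h1]; simp only [Matrix.mul_one, Matrix.mul_assoc]

lemma trace_pow' {n : ℕ} (A : Matrix (Fin n) (Fin n) ℝ) (hA : A.IsHermitian) (k : ℕ) :
    (A ^ k).trace = ∑ i, hA.eigenvalues i ^ k := by
  have h1 : star (hA.eigenvectorUnitary : Matrix (Fin n) (Fin n) ℝ) * hA.eigenvectorUnitary = 1 :=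
    hA.eigenvectorUnitary.2.1
  have h2 : (hA.eigenvectorUnitary : Matrix (Fin n) (Fin n) ℝ) * star (hA.eigenvectorUnitary : Matrix (Fin n) (Fin n) ℝ) = 1 :=
    hA.eigenvectorUnitary.2.2
  have hsp := hA.spectral_theorem
  have hD : (RCLike.ofReal ∘ hA.eigenvalues : Fin n → ℝ) = hA.eigenvalues := by
    ext i; simp
  rw [hD, Unitary.conjStarAlgAut_apply] at hsp
  conv_lhs => rw [hsp]
  rw [conj_pow' _ _ h1 h2, Matrix.trace_mul_cycle, h1, Matrix.one_mul,
    Matrix.diagonal_pow, Matrix.trace_diagonal]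
  simp [Pi.pow_apply]

lemma eig_bound' {n : ℕ} (G : SimpleGraph (Fin n)) [DecidableRel G.Adj]
    (hA : (G.adjMatrix ℝ).IsHermitian) (i : Fin n) :
    |hA.eigenvalues i| ≤ (G.maxDegree : ℝ) := by
  have hsp := hA.eigenvalues_mem_spectrum_real i
  have h : Module.End.HasEigenvalue (Matrix.toLin' (G.adjMatrix ℝ)) (hA.eigenvalues i) := by
    rw [Module.End.hasEigenvalue_iff_mem_spectrum]
    have : Matrix.toLin' (G.adjMatrix ℝ) = Matrix.toLinAlgEquiv' (G.adjMatrix ℝ) := rfl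
    rw [this, AlgEquiv.spectrum_eq]
    exact hsp
  obtain ⟨k, hk⟩ := eigenvalue_mem_ball h
  rw [Metric.mem_closedBall, SimpleGraph.adjMatrix_apply, if_neg (G.irrefl), Real.dist_eq,
    sub_zero] at hk
  refine hk.trans ?_
  have h1 : ∑ j ∈ Finset.univ.erase k, ‖(G.adjMatrix ℝ) k j‖ ≤ (G.degree k : ℝ) := by
    rw [show ((G.degree k : ℝ)) = ∑ j, (G.adjMatrix ℝ) k j by
      simp [SimpleGraph.adjMatrix_apply, SimpleGraph.degree, SimpleGraph.neighborFinset_eq_filter,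
        Finset.sum_boole]]
    refine le_trans (Finset.sum_le_sum_of_subset_of_nonneg (Finset.erase_subset _ _)
      (fun j _ _ => norm_nonneg _)) (le_of_eq ?_)
    refine Finset.sum_congr rfl fun j _ => ?_
    simp [SimpleGraph.adjMatrix_apply, apply_ite (‖·‖)]
  refine h1.trans ?_
  exact_mod_cast G.degree_le_maxDegree k

lemma ptwise' (Δ x r : ℝ) (hΔ : 1 ≤ Δ) (hx : |x| ≤ Δ) (hr : 0 < r) (hr1 : r < 1) :
    |x| ≤ (-1 / (2 * r * (r + 1) ^ 2)) * (x ^ 4 / Δ ^ 3)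
      + ((3 * r ^ 2 + 2 * r + 1) / (2 * r * (r + 1) ^ 2)) * (x ^ 2 / Δ)
      + Δ * (r ^ 2 * (2 * r + 1) / (2 * r * (r + 1) ^ 2)) := by
  have hΔ0 : (0:ℝ) < Δ := lt_of_lt_of_le one_pos hΔ
  have hden : (0:ℝ) < 2 * r * (r + 1) ^ 2 * Δ ^ 3 := by positivity
  have hrhs : (-1 / (2 * r * (r + 1) ^ 2)) * (x ^ 4 / Δ ^ 3)
      + ((3 * r ^ 2 + 2 * r + 1) / (2 * r * (r + 1) ^ 2)) * (x ^ 2 / Δ)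
      + Δ * (r ^ 2 * (2 * r + 1) / (2 * r * (r + 1) ^ 2))
      = (-x ^ 4 + (3 * r ^ 2 + 2 * r + 1) * Δ ^ 2 * x ^ 2 + r ^ 2 * (2 * r + 1) * Δ ^ 4)
        / (2 * r * (r + 1) ^ 2 * Δ ^ 3) := by
    field_simp
  rw [hrhs, le_div_iff₀ hden]
  have h1 : 0 ≤ |x| := abs_nonneg x
  have h2 : x ^ 2 = |x| ^ 2 := (sq_abs x).symm
  have h4 : x ^ 4 = |x| ^ 4 := by rw [show (4:ℕ) = 2*2 by rfl, pow_mul, pow_mul, sq_abs]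
  rw [h2, h4]
  nlinarith [mul_nonneg (mul_nonneg (sq_nonneg (|x| - r * Δ)) (sub_nonneg.2 hx))
    (by positivity : (0:ℝ) ≤ |x| + (2 * r + 1) * Δ), sq_nonneg (|x| - r * Δ), hΔ0.le, hx]

lemma tr2' {n : ℕ} (G : SimpleGraph (Fin n)) [DecidableRel G.Adj] :
    ((G.adjMatrix ℝ) ^ 2).trace = 2 * (G.edgeFinset.card : ℝ) := by
  rw [pow_two, Matrix.trace]
  have : ∀ i, ((G.adjMatrix ℝ) * (G.adjMatrix ℝ)).diag i = (G.degree i : ℝ) := fun i =>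
    G.adjMatrix_mul_self_apply_self i
  rw [Finset.sum_congr rfl fun i _ => this i]
  rw [← Nat.cast_sum]
  rw [SimpleGraph.sum_degrees_eq_twice_card_edges]
  push_cast
  ring

theorem stmt_13 (n : ℕ) (G : SimpleGraph (Fin n)) [DecidableRel G.Adj]
    (hA : (G.adjMatrix ℝ).IsHermitian)
    (hΔ : 1 ≤ G.maxDegree)
    (m Z Q : ℝ)
    (hm : m = (G.edgeFinset.card : ℝ))
    (hZ : Z = ∑ i, (G.degree i : ℝ) ^ 2)
    (hQ : ((G.adjMatrix ℝ) ^ 4).trace = 2 * Z - 2 * m + 8 * Q)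
    (r : ℝ) (hr : 0 < r) (hr1 : r < 1) :
    ∑ i, |hA.eigenvalues i| ≤
      (-1 / (2 * r * (r + 1) ^ 2)) * ((2 * Z - 2 * m + 8 * Q) / (G.maxDegree : ℝ) ^ 3)
      + ((3 * r ^ 2 + 2 * r + 1) / (2 * r * (r + 1) ^ 2)) * (2 * m / (G.maxDegree : ℝ))
      + (G.maxDegree : ℝ) * n * (r ^ 2 * (2 * r + 1) / (2 * r * (r + 1) ^ 2)) := by
  have hΔ' : (1:ℝ) ≤ (G.maxDegree : ℝ) := by exact_mod_cast hΔ
  set Δ : ℝ := (G.maxDegree : ℝ) with hΔdef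
  have hS4 : ∑ i, hA.eigenvalues i ^ 4 = 2 * Z - 2 * m + 8 * Q :=
    (trace_pow' _ hA 4).symm.trans hQ
  have hS2 : ∑ i, hA.eigenvalues i ^ 2 = 2 * m := by
    rw [← trace_pow' _ hA 2, tr2', hm]
  calc ∑ i, |hA.eigenvalues i|
      ≤ ∑ i, ((-1 / (2 * r * (r + 1) ^ 2)) * (hA.eigenvalues i ^ 4 / Δ ^ 3)
        + ((3 * r ^ 2 + 2 * r + 1) / (2 * r * (r + 1) ^ 2)) * (hA.eigenvalues i ^ 2 / Δ)
        + Δ * (r ^ 2 * (2 * r + 1) / (2 * r * (r + 1) ^ 2))) :=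
      Finset.sum_le_sum fun i _ =>
        ptwise' Δ (hA.eigenvalues i) r hΔ' (eig_bound' G hA i) hr hr1
    _ = _ := by
      rw [Finset.sum_add_distrib, Finset.sum_add_distrib, Finset.sum_const,
        ← Finset.mul_sum, ← Finset.mul_sum, ← Finset.sum_div, ← Finset.sum_div, hS4, hS2]
      simp only [Finset.card_univ, Fintype.card_fin, nsmul_eq_mul]
      ring
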